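/- Let A ∈ ℝ^{n×n} be invertible, B ∈ ℝ^{n×m} with (A,B) reachable, and R ∈ ℝ^{m×m} symmetric positive definite. Let P be a symmetric solution of the Stein equation A P Aᵀ − P = B R^{−1} Bᵀ, let S be an A-invariant subspace of ℝⁿ, and let Π_S be the orthogonal projection matrix onto S. Then the Moore–Penrose pseudoinverse Q := [(I − Π_S) P (I − Π_S)]⁺ is symmetric, R + BᵀQB is invertible, and Q solves the homogeneous algebraic Riccati equation Q = AᵀQA − AᵀQB(R + BᵀQB)^{−1}BᵀQA. -/

import Mathlib

open Matrix Polynomial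

/-- `S` is an `A`-invariant subspace. -/
def AInvariant {n : Type*} [Fintype n] (A : Matrix n n ℝ)
    (S : Submodule ℝ (n → ℝ)) : Prop :=
  ∀ x ∈ S, A.mulVec x ∈ S

/-- The pair `(A, B)` is reachable: the only `A`-invariant subspace containing
the column space of `B` is the whole space. -/
def Reachable {n m : Type*} [Fintype n] [Fintype m] (A : Matrix n n ℝ)
    (B : Matrix n m ℝ) : Prop :=
  ∀ S : Submodule ℝ (n → ℝ), AInvariant A S → LinearMap.range B.mulVecLin ≤ S → S = ⊤

/-- A real square matrix is unmixed if no two of its complex eigenvalues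
(roots of its characteristic polynomial over ℂ) multiply to 1. -/
def Unmixed {n : Type*} [Fintype n] [DecidableEq n] (A : Matrix n n ℝ) : Prop :=
  ∀ μ₁ μ₂ : ℂ, (A.map (algebraMap ℝ ℂ)).charpoly.IsRoot μ₁ →
    (A.map (algebraMap ℝ ℂ)).charpoly.IsRoot μ₂ → μ₁ * μ₂ ≠ 1

/-- `Q` is a (symmetric) solution of the homogeneous algebraic Riccati equation
`Q = AᵀQA − AᵀQB(R + BᵀQB)⁻¹BᵀQA` (with `R + BᵀQB` invertible). -/
def IsHARESol {n m : Type*} [Fintype n] [DecidableEq n] [Fintype m] [DecidableEq m]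
    (A : Matrix n n ℝ) (B : Matrix n m ℝ) (R : Matrix m m ℝ)
    (Q : Matrix n n ℝ) : Prop :=
  Q.IsSymm ∧ IsUnit (R + Bᵀ * Q * B) ∧
    Q = Aᵀ * Q * A - Aᵀ * Q * B * (R + Bᵀ * Q * B)⁻¹ * (Bᵀ * Q * A)

/-- `P` is a (symmetric) solution of the Stein equation `A P Aᵀ − P = B R⁻¹ Bᵀ`. -/
def IsSteinSol {n m : Type*} [Fintype n] [DecidableEq n] [Fintype m] [DecidableEq m]
    (A : Matrix n n ℝ) (B : Matrix n m ℝ) (R : Matrix m m ℝ)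
    (P : Matrix n n ℝ) : Prop :=
  P.IsSymm ∧ A * P * Aᵀ - P = B * R⁻¹ * Bᵀ

/-- `Pr` is the matrix of the orthogonal projection onto the subspace `S`. -/
def IsOrthProjOnto {n : Type*} [Fintype n] (S : Submodule ℝ (n → ℝ))
    (Pr : Matrix n n ℝ) : Prop :=
  Pr.IsSymm ∧ Pr * Pr = Pr ∧ LinearMap.range Pr.mulVecLin = S

/-- `X` is the Moore–Penrose pseudoinverse of `M` (the four Penrose conditions). -/
def IsMPPseudoinverse {n : Type*} [Fintype n] (M X : Matrix n n ℝ) : Prop :=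
  M * X * M = M ∧ X * M * X = X ∧ (M * X)ᵀ = M * X ∧ (X * M)ᵀ = X * M

lemma pinv_unique {k : ℕ} {M X Y : Matrix (Fin k) (Fin k) ℝ}
    (hX : IsMPPseudoinverse M X) (hY : IsMPPseudoinverse M Y) : X = Y := by
  obtain ⟨hX1, hX2, hX3, hX4⟩ := hX
  obtain ⟨hY1, hY2, hY3, hY4⟩ := hY
  have e1 : X = X * M * Y := by
    calc X = X * M * X := hX2.symm
    _ = X * (M * X)ᵀ := by rw [hX3, Matrix.mul_assoc]
    _ = X * (M * Y * M * X)ᵀ := by rw [hY1]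
    _ = X * (M * X)ᵀ * (M * Y)ᵀ := by
        simp only [Matrix.transpose_mul, Matrix.mul_assoc]
    _ = X * (M * X) * (M * Y) := by rw [hX3, hY3]
    _ = (X * M * X) * (M * Y) := by simp only [Matrix.mul_assoc]
    _ = X * M * Y := by rw [hX2, Matrix.mul_assoc]
  have e2 : Y = X * M * Y := by
    calc Y = Y * M * Y := hY2.symm
    _ = (Y * M)ᵀ * Y := by rw [hY4]
    _ = (Y * M * X * M)ᵀ * Y := by
        rw [show Y * M * X * M = Y * M from by rw [Matrix.mul_assoc, Matrix.mul_assoc, ← Matrix.mul_assoc M X M, hX1]]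
    _ = (X * M)ᵀ * (Y * M)ᵀ * Y := by
        simp only [Matrix.transpose_mul, Matrix.mul_assoc]
    _ = X * M * (Y * M * Y) := by rw [hX4, hY4]; simp only [Matrix.mul_assoc]
    _ = X * M * Y := by rw [hY2]
  rw [e1, ← e2]

lemma pinv_symm {k : ℕ} {M Q : Matrix (Fin k) (Fin k) ℝ} (hM : Mᵀ = M)
    (hQ : IsMPPseudoinverse M Q) : Qᵀ = Q := by
  obtain ⟨h1, h2, h3, h4⟩ := hQ
  have hQt : IsMPPseudoinverse M Qᵀ := by
    refine ⟨?_, ?_, ?_, ?_⟩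
    · calc M * Qᵀ * M = (Mᵀ * Q * Mᵀ)ᵀ := by simp [Matrix.transpose_mul, Matrix.mul_assoc]
      _ = (M * Q * M)ᵀ := by rw [hM]
      _ = Mᵀ := by rw [h1]
      _ = M := hM
    · calc Qᵀ * M * Qᵀ = (Mᵀ * Q)ᵀ * Qᵀ := by simp [Matrix.transpose_mul]
      _ = (Q * (Mᵀ * Q))ᵀ := by simp [Matrix.transpose_mul]
      _ = (Q * M * Q)ᵀ := by rw [hM, Matrix.mul_assoc]
      _ = Qᵀ := by rw [h2]
    · calc (M * Qᵀ)ᵀ = Q * Mᵀ := by simp [Matrix.transpose_mul]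
      _ = Q * M := by rw [hM]
      _ = (Q * M)ᵀ := h4.symm
      _ = Mᵀ * Qᵀ := by simp [Matrix.transpose_mul]
      _ = M * Qᵀ := by rw [hM]
    · calc (Qᵀ * M)ᵀ = Mᵀ * Q := by simp [Matrix.transpose_mul]
      _ = M * Q := by rw [hM]
      _ = (M * Q)ᵀ := h3.symm
      _ = Qᵀ * Mᵀ := by simp [Matrix.transpose_mul]
      _ = Qᵀ * M := by rw [hM]
  exact pinv_unique hQt ⟨h1, h2, h3, h4⟩

lemma matrix_eq_zero_of_mulVec {a b : ℕ} {M : Matrix (Fin a) (Fin b) ℝ}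
    (h : ∀ x, M *ᵥ x = 0) : M = 0 := by
  ext i j
  have := congrFun (h (Pi.single j 1)) i
  simpa [Matrix.mulVec_single] using this

lemma quad_congr {a b : ℕ} (D : Matrix (Fin a) (Fin b) ℝ) (C : Matrix (Fin b) (Fin b) ℝ)
    (y : Fin a → ℝ) :
    y ⬝ᵥ ((D * C * Dᵀ) *ᵥ y) = (Dᵀ *ᵥ y) ⬝ᵥ (C *ᵥ (Dᵀ *ᵥ y)) := by
  rw [← Matrix.mulVec_mulVec, ← Matrix.mulVec_mulVec, Matrix.dotProduct_mulVec,
    ← Matrix.mulVec_transpose]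

set_option maxHeartbeats 2000000 in
lemma key_inj {n m : ℕ} (A : Matrix (Fin n) (Fin n) ℝ) (B : Matrix (Fin n) (Fin m) ℝ)
    (R : Matrix (Fin m) (Fin m) ℝ)
    (hA : IsUnit A) (hreach : Reachable A B) (hR : R.PosDef)
    (P : Matrix (Fin n) (Fin n) ℝ) (hP : IsSteinSol A B R P)
    (S : Submodule ℝ (Fin n → ℝ)) (hS : AInvariant A S)
    (Pr : Matrix (Fin n) (Fin n) ℝ) (hPr : IsOrthProjOnto S Pr)
    (x : Fin n → ℝ) (hx1 : (1 - Pr) *ᵥ x = x)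
    (hx2 : ((1 - Pr) * P * (1 - Pr)) *ᵥ x = 0) : x = 0 := by
  by_contra hx0
  set N : Matrix (Fin n) (Fin n) ℝ := 1 - Pr with hNdef
  set G : Matrix (Fin n) (Fin n) ℝ := B * R⁻¹ * Bᵀ with hGdef
  set M : Matrix (Fin n) (Fin n) ℝ := N * P * N with hMdef
  set F : Matrix (Fin n) (Fin n) ℝ := N * A with hFdef
  have hPrs : Prᵀ = Pr := hPr.1
  have hPri : Pr * Pr = Pr := hPr.2.1
  have hNs : Nᵀ = N := by
    rw [hNdef, Matrix.transpose_sub, Matrix.transpose_one, hPrs]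
  have expandR : ∀ X : Matrix (Fin n) (Fin n) ℝ, X * N = X - X * Pr := fun X => by
    rw [hNdef, Matrix.mul_sub, Matrix.mul_one]
  have expandL : ∀ X : Matrix (Fin n) (Fin n) ℝ, N * X = X - Pr * X := fun X => by
    rw [hNdef, Matrix.sub_mul, Matrix.one_mul]
  have hmem : ∀ y, y ∈ S ↔ Pr *ᵥ y = y := by
    intro y
    constructor
    · intro hy
      rw [← hPr.2.2] at hy
      obtain ⟨z, rfl⟩ := hy
      show Pr *ᵥ (Pr *ᵥ z) = Pr *ᵥ z
      rw [Matrix.mulVec_mulVec, hPri]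
    · intro h
      rw [← hPr.2.2]
      exact ⟨y, h⟩
  have hmemN : ∀ y, y ∈ S → N *ᵥ y = 0 := by
    intro y hy
    rw [hNdef, Matrix.sub_mulVec, Matrix.one_mulVec, (hmem y).1 hy, sub_self]
  have hNAPr : N * A * Pr = 0 := by
    apply matrix_eq_zero_of_mulVec
    intro y
    have h1 : Pr *ᵥ y ∈ S := (hmem _).2 (by rw [Matrix.mulVec_mulVec, hPri])
    have h3 : N *ᵥ (A *ᵥ (Pr *ᵥ y)) = 0 := hmemN _ (hS _ h1)
    rw [← Matrix.mulVec_mulVec, ← Matrix.mulVec_mulVec]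
    exact h3
  have hNA : N * A * N = N * A := by
    rw [expandR (N * A), show N * A * Pr = 0 from hNAPr, sub_zero]
  have hNAt : N * Aᵀ * N = Aᵀ * N := by
    have h := congrArg Matrix.transpose hNA
    simp only [Matrix.transpose_mul, hNs] at h
    rw [← Matrix.mul_assoc] at h
    exact h
  have hNN : N * N = N := by
    rw [expandR N, expandL Pr, hPri, sub_self, sub_zero]
  have hNFt : N * (Aᵀ * N) = Aᵀ * N := by rw [← Matrix.mul_assoc]; exact hNAt
  have hFt : Fᵀ = Aᵀ * N := by rw [hFdef, Matrix.transpose_mul, hNs]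
  have hstein : A * P * Aᵀ = P + G := by
    have h := hP.2
    rw [sub_eq_iff_eq_add] at h
    rw [h, hGdef, add_comm]
  have hFMFt : F * M * Fᵀ = M + N * G * N := by
    have e1 : F * M * Fᵀ = (N * A * N) * P * (N * Aᵀ * N) := by
      rw [hFt, hFdef, hMdef]
      simp only [Matrix.mul_assoc]
    rw [e1, hNA, hNAt]
    have e2 : N * A * P * (Aᵀ * N) = N * (A * P * Aᵀ) * N := by
      simp only [Matrix.mul_assoc]
    calc N * A * P * (Aᵀ * N) = N * (A * P * Aᵀ) * N := e2
    _ = N * (P + G) * N := by rw [hstein]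
    _ = M + N * G * N := by rw [hMdef]; noncomm_ring
  have hPsymm : Pᵀ = P := hP.1
  have hMs : Mᵀ = M := by
    rw [hMdef]
    simp only [Matrix.transpose_mul, hNs, hPsymm]
    simp only [Matrix.mul_assoc]
  -- powers of Fᵀ on vectors fixed by N
  have hpow : ∀ (j : ℕ) (y : Fin n → ℝ), N *ᵥ y = y →
      ((Fᵀ) ^ j) *ᵥ y = ((Aᵀ) ^ j) *ᵥ y ∧ N *ᵥ (((Fᵀ) ^ j) *ᵥ y) = ((Fᵀ) ^ j) *ᵥ y := by
    intro j
    induction j with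
    | zero => intro y hy; simpa using hy
    | succ j ih =>
      intro y hy
      have hFy : Fᵀ *ᵥ y = Aᵀ *ᵥ y := by
        rw [hFt, ← Matrix.mulVec_mulVec, hy]
      have hNFy : N *ᵥ (Fᵀ *ᵥ y) = Fᵀ *ᵥ y := by
        rw [Matrix.mulVec_mulVec, hFt, hNFt]
      obtain ⟨ih1, ih2⟩ := ih (Fᵀ *ᵥ y) hNFy
      have hsplit : ((Fᵀ) ^ (j+1)) *ᵥ y = ((Fᵀ) ^ j) *ᵥ (Fᵀ *ᵥ y) := by
        rw [Matrix.mulVec_mulVec, ← pow_succ]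
      have hsplitA : ((Aᵀ) ^ (j+1)) *ᵥ y = ((Aᵀ) ^ j) *ᵥ (Aᵀ *ᵥ y) := by
        rw [Matrix.mulVec_mulVec, ← pow_succ]
      constructor
      · rw [hsplit, hsplitA, ih1, hFy]
      · rw [hsplit, ih2]
  -- positivity of G-quadratic forms
  have hRinv : (R⁻¹).PosDef := hR.inv
  have hGform : ∀ y : Fin n → ℝ, y ⬝ᵥ (G *ᵥ y) = (Bᵀ *ᵥ y) ⬝ᵥ (R⁻¹ *ᵥ (Bᵀ *ᵥ y)) := by
    intro y; rw [hGdef]; exact quad_congr B R⁻¹ y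
  have hGpsd : ∀ y : Fin n → ℝ, 0 ≤ y ⬝ᵥ (G *ᵥ y) := by
    intro y
    rw [hGform]
    have := hRinv.posSemidef.dotProduct_mulVec_nonneg (Bᵀ *ᵥ y)
    simpa using this
  have hGpos : ∀ y : Fin n → ℝ, Bᵀ *ᵥ y ≠ 0 → 0 < y ⬝ᵥ (G *ᵥ y) := by
    intro y hy
    rw [hGform]
    have := hRinv.dotProduct_mulVec_pos hy
    simpa using this
  have hNGN : ∀ y : Fin n → ℝ, y ⬝ᵥ ((N * G * N) *ᵥ y) = (N *ᵥ y) ⬝ᵥ (G *ᵥ (N *ᵥ y)) := by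
    intro y
    have h := quad_congr N G y
    rw [hNs] at h
    exact h
  have hNGNpsd : ∀ y : Fin n → ℝ, 0 ≤ y ⬝ᵥ ((N * G * N) *ᵥ y) := fun y => by
    rw [hNGN]; exact hGpsd _
  -- the step identity
  have hstep : ∀ (k : ℕ) (y : Fin n → ℝ),
      y ⬝ᵥ ((F ^ (k+1) * M * (F ^ (k+1))ᵀ) *ᵥ y) =
      y ⬝ᵥ ((F ^ k * M * (F ^ k)ᵀ) *ᵥ y) + ((F ^ k)ᵀ *ᵥ y) ⬝ᵥ ((N * G * N) *ᵥ ((F ^ k)ᵀ *ᵥ y)) := by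
    intro k y
    have hmat : F ^ (k+1) * M * (F ^ (k+1))ᵀ =
        F ^ k * M * (F ^ k)ᵀ + F ^ k * (N * G * N) * (F ^ k)ᵀ := by
      rw [pow_succ, Matrix.transpose_mul]
      have e : F ^ k * F * M * (Fᵀ * (F ^ k)ᵀ) = F ^ k * (F * M * Fᵀ) * (F ^ k)ᵀ := by
        simp only [Matrix.mul_assoc]
      rw [e, hFMFt]
      noncomm_ring
    rw [hmat, Matrix.add_mulVec, dotProduct_add, quad_congr (F ^ k) (N * G * N) y]
  have hmono : ∀ (k : ℕ) (y : Fin n → ℝ),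
      y ⬝ᵥ (M *ᵥ y) ≤ y ⬝ᵥ ((F ^ k * M * (F ^ k)ᵀ) *ᵥ y) := by
    intro k y
    induction k with
    | zero => simp
    | succ k ih =>
      rw [hstep k y]
      have := hNGNpsd ((F ^ k)ᵀ *ᵥ y)
      linarith
  -- reachability gives an index j₀ with Bᵀ (Aᵀ)^j₀ x ≠ 0
  have hexj : ∃ j : ℕ, Bᵀ *ᵥ ((Aᵀ ^ j) *ᵥ x) ≠ 0 := by
    by_contra hall
    push_neg at hall
    let W : Submodule ℝ (Fin n → ℝ) :=
      { carrier := {y | N *ᵥ y = y ∧ ∀ j : ℕ, Bᵀ *ᵥ ((Aᵀ ^ j) *ᵥ y) = 0}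
        add_mem' := by
          rintro a b ⟨ha1, ha2⟩ ⟨hb1, hb2⟩
          refine ⟨?_, fun j => ?_⟩
          · rw [Matrix.mulVec_add, ha1, hb1]
          · rw [Matrix.mulVec_add, Matrix.mulVec_add, ha2 j, hb2 j, add_zero]
        zero_mem' := by
          refine ⟨?_, fun j => ?_⟩ <;> simp
        smul_mem' := by
          rintro c a ⟨ha1, ha2⟩
          refine ⟨?_, fun j => ?_⟩
          · rw [Matrix.mulVec_smul, ha1]
          · rw [Matrix.mulVec_smul, Matrix.mulVec_smul, ha2 j, smul_zero] }
    have hWA : ∀ w ∈ W, Aᵀ *ᵥ w ∈ W := by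
      rintro w ⟨hw1, hw2⟩
      refine ⟨?_, fun j => ?_⟩
      · have h1 : Aᵀ *ᵥ w = (Aᵀ * N) *ᵥ w := by rw [← Matrix.mulVec_mulVec, hw1]
        rw [h1, Matrix.mulVec_mulVec, hNFt]
      · have h2 : (Aᵀ ^ j) *ᵥ (Aᵀ *ᵥ w) = (Aᵀ ^ (j+1)) *ᵥ w := by
          rw [Matrix.mulVec_mulVec, ← pow_succ]
        rw [h2]
        exact hw2 (j+1)
    let S' : Submodule ℝ (Fin n → ℝ) :=
      { carrier := {z | ∀ w ∈ W, w ⬝ᵥ z = 0}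
        add_mem' := fun ha hb w hw => by
          rw [dotProduct_add, ha w hw, hb w hw, add_zero]
        zero_mem' := fun w hw => dotProduct_zero w
        smul_mem' := fun c a ha w hw => by
          rw [dotProduct_smul, ha w hw, smul_zero] }
    have hS'A : AInvariant A S' := by
      intro z hz w hw
      show w ⬝ᵥ (A *ᵥ z) = 0
      rw [Matrix.dotProduct_mulVec, ← Matrix.mulVec_transpose]
      exact hz _ (hWA w hw)
    have hS'B : LinearMap.range B.mulVecLin ≤ S' := by
      rintro _ ⟨u, rfl⟩ w hw
      show w ⬝ᵥ (B *ᵥ u) = 0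
      rw [Matrix.dotProduct_mulVec, ← Matrix.mulVec_transpose]
      have h0 : Bᵀ *ᵥ w = 0 := by simpa using hw.2 0
      rw [h0, zero_dotProduct]
    have htop := hreach S' hS'A hS'B
    have hxW : x ∈ W := ⟨hx1, hall⟩
    have hxS' : x ∈ S' := htop ▸ Submodule.mem_top
    have hxx : x ⬝ᵥ x = 0 := hxS' x hxW
    exact hx0 (by simpa [dotProduct_self_eq_zero] using hxx)
  obtain ⟨j₀, hj₀⟩ := hexj
  set k : ℕ := j₀ + 1 with hkdef
  have hMx0 : x ⬝ᵥ (M *ᵥ x) = 0 := by rw [hx2, dotProduct_zero]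
  -- the strict positivity at x after k steps
  have hxpos : 0 < x ⬝ᵥ ((F ^ k * M * (F ^ k)ᵀ) *ᵥ x) := by
    have h1 := hmono j₀ x
    have h2 := hstep j₀ x
    have hz : (F ^ j₀)ᵀ *ᵥ x = (Aᵀ ^ j₀) *ᵥ x := by
      rw [Matrix.transpose_pow]
      exact (hpow j₀ x hx1).1
    have hNfix : N *ᵥ ((F ^ j₀)ᵀ *ᵥ x) = (F ^ j₀)ᵀ *ᵥ x := by
      rw [Matrix.transpose_pow]
      exact (hpow j₀ x hx1).2
    have hGt : 0 < ((F ^ j₀)ᵀ *ᵥ x) ⬝ᵥ ((N * G * N) *ᵥ ((F ^ j₀)ᵀ *ᵥ x)) := by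
      rw [hNGN, hNfix]
      apply hGpos
      rw [hz]
      exact hj₀
    rw [hkdef, h2]
    linarith
  -- positive-definite subspaces of every dimension: contradiction with dim = n
  have hgrow : ∀ d : ℕ, ∃ U : Submodule ℝ (Fin n → ℝ),
      Module.finrank ℝ U = d ∧ (∀ y ∈ U, N *ᵥ y = y) ∧
      (∀ y ∈ U, y ≠ 0 → 0 < y ⬝ᵥ (M *ᵥ y)) := by
    intro d
    induction d with
    | zero =>
      refine ⟨⊥, by simp, ?_, ?_⟩
      · intro y hy
        rw [Submodule.mem_bot] at hy
        simp [hy]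
      · intro y hy hy0
        rw [Submodule.mem_bot] at hy
        exact absurd hy hy0
    | succ d ih =>
      obtain ⟨U, hUrank, hUN, hUpos⟩ := ih
      have hxU : x ∉ U := fun hxU => lt_irrefl 0 (hMx0 ▸ hUpos x hxU hx0)
      have hinf : U ⊓ (ℝ ∙ x) = ⊥ := by
        rw [Submodule.eq_bot_iff]
        rintro y ⟨hyU, hyx⟩
        obtain ⟨c, rfl⟩ := Submodule.mem_span_singleton.1 hyx
        by_contra hy0
        have hc : c ≠ 0 := fun h => hy0 (by simp [h])
        have hxmem : x ∈ U := by
          have := U.smul_mem c⁻¹ hyU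
          rwa [smul_smul, inv_mul_cancel₀ hc, one_smul] at this
        exact hxU hxmem
      have hU'rank : Module.finrank ℝ (U ⊔ (ℝ ∙ x) : Submodule ℝ (Fin n → ℝ)) = d + 1 := by
        have h := Submodule.finrank_sup_add_finrank_inf_eq U (ℝ ∙ x)
        rw [hinf, hUrank, finrank_span_singleton hx0, finrank_bot, add_zero] at h
        exact h
      have hU'N : ∀ y ∈ U ⊔ (ℝ ∙ x), N *ᵥ y = y := by
        intro y hy
        obtain ⟨u, hu, v, hv, rfl⟩ := Submodule.mem_sup.1 hy
        obtain ⟨c, rfl⟩ := Submodule.mem_span_singleton.1 hv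
        rw [Matrix.mulVec_add, Matrix.mulVec_smul, hUN u hu, hx1]
      have hposU' : ∀ y ∈ U ⊔ (ℝ ∙ x), y ≠ 0 → 0 < y ⬝ᵥ ((F ^ k * M * (F ^ k)ᵀ) *ᵥ y) := by
        intro y hy hy0
        obtain ⟨u, hu, v, hv, rfl⟩ := Submodule.mem_sup.1 hy
        obtain ⟨c, rfl⟩ := Submodule.mem_span_singleton.1 hv
        have hMcx : M *ᵥ (c • x) = 0 := by rw [Matrix.mulVec_smul, hx2, smul_zero]
        have hxMz : ∀ z : Fin n → ℝ, x ⬝ᵥ (M *ᵥ z) = 0 := by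
          intro z
          rw [Matrix.dotProduct_mulVec, ← Matrix.mulVec_transpose, hMs, hx2,
            zero_dotProduct]
        have hyM : (u + c • x) ⬝ᵥ (M *ᵥ (u + c • x)) = u ⬝ᵥ (M *ᵥ u) := by
          rw [Matrix.mulVec_add, hMcx, add_zero, add_dotProduct,
            smul_dotProduct, hxMz u, smul_zero, add_zero]
        by_cases hu0 : u = 0
        · have hc : c ≠ 0 := by
            intro h
            exact hy0 (by rw [hu0, h, zero_smul, add_zero])
          have hyx : u + c • x = c • x := by rw [hu0, zero_add]
          rw [hyx]
          have hval : (c • x) ⬝ᵥ ((F ^ k * M * (F ^ k)ᵀ) *ᵥ (c • x)) =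
              (c * c) * (x ⬝ᵥ ((F ^ k * M * (F ^ k)ᵀ) *ᵥ x)) := by
            rw [Matrix.mulVec_smul, smul_dotProduct, dotProduct_smul,
              smul_eq_mul, smul_eq_mul]
            ring
          rw [hval]
          exact mul_pos (mul_self_pos.mpr hc) hxpos
        · have h1 : 0 < u ⬝ᵥ (M *ᵥ u) := hUpos u hu hu0
          have h2 := hmono k (u + c • x)
          rw [hyM] at h2
          linarith
      -- transport U ⊔ span x through (Aᵀ)^k
      have hAt : IsUnit (Aᵀ ^ k) := ((Matrix.isUnit_transpose A).mpr hA).pow k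
      have hAtinv : Invertible (Aᵀ ^ k) :=
        (Aᵀ ^ k).invertibleOfIsUnitDet ((Matrix.isUnit_iff_isUnit_det _).1 hAt)
      have he : ((Aᵀ ^ k).toLinearEquiv' hAtinv : (Fin n → ℝ) →ₗ[ℝ] (Fin n → ℝ))
          = (Aᵀ ^ k).mulVecLin := by
        refine LinearMap.ext fun v => ?_
        rw [Matrix.toLinearEquiv'_apply]
        rw [Matrix.toLin'_apply']
      refine ⟨(U ⊔ (ℝ ∙ x)).map (Aᵀ ^ k).mulVecLin, ?_, ?_, ?_⟩
      · rw [← he, LinearEquiv.finrank_map_eq, hU'rank]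
      · rintro z ⟨y, hy, rfl⟩
        have hNy := hU'N y hy
        show N *ᵥ ((Aᵀ ^ k) *ᵥ y) = (Aᵀ ^ k) *ᵥ y
        rw [← (hpow k y hNy).1]
        exact (hpow k y hNy).2
      · rintro z ⟨y, hy, rfl⟩ hz0
        have hNy := hU'N y hy
        have hy0 : y ≠ 0 := by
          rintro rfl
          exact hz0 (by simp)
        have h1 : (Aᵀ ^ k).mulVecLin y = ((F ^ k)ᵀ) *ᵥ y := by
          show (Aᵀ ^ k) *ᵥ y = ((F ^ k)ᵀ) *ᵥ y
          rw [Matrix.transpose_pow]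
          exact ((hpow k y hNy).1).symm
        rw [h1, ← quad_congr (F ^ k) M y]
        exact hposU' y hy hy0
  obtain ⟨U, hUrank, -, -⟩ := hgrow (n + 1)
  have hle : Module.finrank ℝ U ≤ n := by
    have h := Submodule.finrank_le U
    rwa [Module.finrank_fin_fun] at h
  omega
theorem pseudoinverse_of_projected_Stein_solution_solves_HARE
    {n m : ℕ} (A : Matrix (Fin n) (Fin n) ℝ) (B : Matrix (Fin n) (Fin m) ℝ)
    (R : Matrix (Fin m) (Fin m) ℝ)
    (hA : IsUnit A) (hreach : Reachable A B) (hR : R.PosDef)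
    (P : Matrix (Fin n) (Fin n) ℝ) (hP : IsSteinSol A B R P)
    (S : Submodule ℝ (Fin n → ℝ)) (hS : AInvariant A S)
    (Pr : Matrix (Fin n) (Fin n) ℝ) (hPr : IsOrthProjOnto S Pr)
    (Q : Matrix (Fin n) (Fin n) ℝ)
    (hQ : IsMPPseudoinverse ((1 - Pr) * P * (1 - Pr)) Q) :
    IsHARESol A B R Q := by
  obtain ⟨hQ1, hQ2, hQ3, hQ4⟩ := hQ
  set N : Matrix (Fin n) (Fin n) ℝ := 1 - Pr with hNdef
  set G : Matrix (Fin n) (Fin n) ℝ := B * R⁻¹ * Bᵀ with hGdef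
  set M : Matrix (Fin n) (Fin n) ℝ := N * P * N with hMdef
  set T : Matrix (Fin m) (Fin m) ℝ := R + Bᵀ * Q * B with hTdef
  have hPrs : Prᵀ = Pr := hPr.1
  have hPri : Pr * Pr = Pr := hPr.2.1
  have hNs : Nᵀ = N := by
    rw [hNdef, Matrix.transpose_sub, Matrix.transpose_one, hPrs]
  have expandR : ∀ X : Matrix (Fin n) (Fin n) ℝ, X * N = X - X * Pr := fun X => by
    rw [hNdef, Matrix.mul_sub, Matrix.mul_one]
  have hNN : N * N = N := by
    rw [expandR N, hNdef, Matrix.sub_mul, Matrix.one_mul, hPri, sub_self, sub_zero]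
  have hmem : ∀ y, y ∈ S ↔ Pr *ᵥ y = y := by
    intro y
    constructor
    · intro hy
      rw [← hPr.2.2] at hy
      obtain ⟨z, rfl⟩ := hy
      show Pr *ᵥ (Pr *ᵥ z) = Pr *ᵥ z
      rw [Matrix.mulVec_mulVec, hPri]
    · intro h
      rw [← hPr.2.2]
      exact ⟨y, h⟩
  have hmemN : ∀ y, y ∈ S → N *ᵥ y = 0 := by
    intro y hy
    rw [hNdef, Matrix.sub_mulVec, Matrix.one_mulVec, (hmem y).1 hy, sub_self]
  have hNAPr : N * A * Pr = 0 := by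
    apply matrix_eq_zero_of_mulVec
    intro y
    have h1 : Pr *ᵥ y ∈ S := (hmem _).2 (by rw [Matrix.mulVec_mulVec, hPri])
    have h3 : N *ᵥ (A *ᵥ (Pr *ᵥ y)) = 0 := hmemN _ (hS _ h1)
    rw [← Matrix.mulVec_mulVec, ← Matrix.mulVec_mulVec]
    exact h3
  have hNA : N * A * N = N * A := by
    rw [expandR (N * A), hNAPr, sub_zero]
  have hNAt : N * Aᵀ * N = Aᵀ * N := by
    have h := congrArg Matrix.transpose hNA
    simp only [Matrix.transpose_mul, hNs] at h
    rw [← Matrix.mul_assoc] at h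
    exact h
  have hAdet : IsUnit A.det := (Matrix.isUnit_iff_isUnit_det A).1 hA
  have hAiA : A⁻¹ * A = 1 := Matrix.nonsing_inv_mul A hAdet
  have hAAi : A * A⁻¹ = 1 := Matrix.mul_nonsing_inv A hAdet
  -- S is also A⁻¹-invariant
  have hSAi : ∀ y ∈ S, A⁻¹ *ᵥ y ∈ S := by
    have hinj : Function.Injective (A.mulVecLin) := by
      have := Matrix.mulVec_injective_iff_isUnit.2 hA
      exact this
    have hmaple : S.map A.mulVecLin ≤ S := by
      rintro _ ⟨y, hy, rfl⟩
      exact hS y hy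
    have hrank : Module.finrank ℝ (S.map A.mulVecLin) = Module.finrank ℝ S := by
      have hAinv : Invertible A := A.invertibleOfIsUnitDet hAdet
      have he : (A.toLinearEquiv' hAinv : (Fin n → ℝ) →ₗ[ℝ] (Fin n → ℝ)) = A.mulVecLin := by
        refine LinearMap.ext fun v => ?_
        rw [Matrix.toLinearEquiv'_apply, Matrix.toLin'_apply']
      rw [← he, LinearEquiv.finrank_map_eq]
    have heq : S.map A.mulVecLin = S :=
      Submodule.eq_of_le_of_finrank_le hmaple (le_of_eq hrank.symm)
    intro y hy
    rw [← heq] at hy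
    obtain ⟨z, hz, rfl⟩ := hy
    show A⁻¹ *ᵥ (A *ᵥ z) ∈ S
    rw [Matrix.mulVec_mulVec, hAiA, Matrix.one_mulVec]
    exact hz
  have hNAiPr : N * A⁻¹ * Pr = 0 := by
    apply matrix_eq_zero_of_mulVec
    intro y
    have h1 : Pr *ᵥ y ∈ S := (hmem _).2 (by rw [Matrix.mulVec_mulVec, hPri])
    have h3 : N *ᵥ (A⁻¹ *ᵥ (Pr *ᵥ y)) = 0 := hmemN _ (hSAi _ h1)
    rw [← Matrix.mulVec_mulVec, ← Matrix.mulVec_mulVec]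
    exact h3
  have hPsymm : Pᵀ = P := hP.1
  have hMs : Mᵀ = M := by
    rw [hMdef]
    simp only [Matrix.transpose_mul, hNs, hPsymm]
    simp only [Matrix.mul_assoc]
  have hQs : Qᵀ = Q := pinv_symm hMs ⟨hQ1, hQ2, hQ3, hQ4⟩
  have hMQcomm : M * Q = Q * M := by
    have h := hQ4
    rw [Matrix.transpose_mul, hMs, hQs] at h
    exact h
  -- key injectivity
  have key : ∀ x, N *ᵥ x = x → M *ᵥ x = 0 → x = 0 := by
    intro x h1 h2
    exact key_inj A B R hA hreach hR P hP S hS Pr hPr x h1 h2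
  -- M * Q = N
  have hNM : N * M = M := by
    rw [hMdef, ← Matrix.mul_assoc, ← Matrix.mul_assoc, hNN]
  have hMN : M * N = M := by
    rw [hMdef, Matrix.mul_assoc, Matrix.mul_assoc, hNN, ← Matrix.mul_assoc]
  have hMMQ : M * (M * Q) = M := by
    rw [hMQcomm, ← Matrix.mul_assoc, hQ1]
  have hMQ : M * Q = N := by
    have hD : ∀ x, (N - M * Q) *ᵥ x = 0 := by
      intro x
      apply key
      · rw [Matrix.mulVec_mulVec, Matrix.mul_sub, hNN, ← Matrix.mul_assoc, hNM]
      · rw [Matrix.mulVec_mulVec, Matrix.mul_sub, hMN, hMMQ, sub_self, Matrix.zero_mulVec]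
    have h0 : N - M * Q = 0 := matrix_eq_zero_of_mulVec (by simpa using hD)
    have := sub_eq_zero.1 h0
    exact this.symm
  have hQM : Q * M = N := by rw [← hMQcomm, hMQ]
  have hNQ : N * Q = Q := by
    rw [← hQM]
    exact hQ2
  have hQN : Q * N = Q := by
    rw [← hMQ, ← Matrix.mul_assoc]
    exact hQ2
  have hQPN : Q * P * N = N := by
    calc Q * P * N = Q * N * P * N := by rw [hQN]
    _ = Q * (N * P * N) := by simp only [Matrix.mul_assoc]
    _ = Q * M := by rw [← hMdef]
    _ = N := hQM
  have hNPQ : N * P * Q = N := by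
    calc N * P * Q = N * P * (N * Q) := by rw [hNQ]
    _ = (N * P * N) * Q := by simp only [Matrix.mul_assoc]
    _ = N := by rw [← hMdef]; exact hMQ
  have hNAtQ : N * (Aᵀ * Q) = Aᵀ * Q := by
    calc N * (Aᵀ * Q) = N * (Aᵀ * (N * Q)) := by rw [hNQ]
    _ = (N * Aᵀ * N) * Q := by simp only [Matrix.mul_assoc]
    _ = Aᵀ * (N * Q) := by rw [hNAt, Matrix.mul_assoc]
    _ = Aᵀ * Q := by rw [hNQ]
  have hQAiPr : Q * A⁻¹ * Pr = 0 := by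
    calc Q * A⁻¹ * Pr = Q * (N * A⁻¹ * Pr) := by
          conv_lhs => rw [← hQN]
          simp only [Matrix.mul_assoc]
    _ = 0 := by rw [hNAiPr, Matrix.mul_zero]
  -- the fundamental identity
  have hstein : G = A * P * Aᵀ - P := hP.2.symm
  have hQPAtQ : Q * (P * (Aᵀ * Q)) = Aᵀ * Q := by
    calc Q * (P * (Aᵀ * Q)) = Q * (P * (N * (Aᵀ * Q))) := by rw [hNAtQ]
    _ = (Q * P * N) * (Aᵀ * Q) := by simp only [Matrix.mul_assoc]
    _ = N * (Aᵀ * Q) := by rw [hQPN]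
    _ = Aᵀ * Q := hNAtQ
  have hQAiPQ : Q * (A⁻¹ * (P * Q)) = Q * A⁻¹ := by
    have hPQ : P * Q = Pr * (P * Q) + N * (P * Q) := by
      have : Pr + N = 1 := by rw [hNdef]; abel
      calc P * Q = (Pr + N) * (P * Q) := by rw [this, Matrix.one_mul]
      _ = Pr * (P * Q) + N * (P * Q) := by rw [Matrix.add_mul]
    have hNPQ' : N * (P * Q) = N := by rw [← Matrix.mul_assoc]; exact hNPQ
    have hQAiN : Q * A⁻¹ * N = Q * A⁻¹ := by
      calc Q * A⁻¹ * N = Q * (N * A⁻¹ * N) := by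
            conv_lhs => rw [← hQN]
            simp only [Matrix.mul_assoc]
      _ = Q * (N * A⁻¹) := by
            rw [expandR (N * A⁻¹), hNAiPr, sub_zero]
      _ = Q * A⁻¹ := by rw [← Matrix.mul_assoc, hQN]
    calc Q * (A⁻¹ * (P * Q)) = Q * (A⁻¹ * (Pr * (P * Q) + N)) := by
          conv_lhs => rw [hPQ, hNPQ']
    _ = Q * A⁻¹ * Pr * (P * Q) + Q * A⁻¹ * N := by
          rw [Matrix.mul_add, Matrix.mul_add]; simp only [Matrix.mul_assoc]
    _ = Q * A⁻¹ := by rw [hQAiPr, Matrix.zero_mul, hQAiN, zero_add]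
  have hstar : Aᵀ * Q = Q * A⁻¹ + Q * A⁻¹ * G * Q := by
    have e1 : Q * A⁻¹ * G * Q = Q * (P * (Aᵀ * Q)) - Q * (A⁻¹ * (P * Q)) := by
      calc Q * A⁻¹ * G * Q = Q * A⁻¹ * (A * P * Aᵀ - P) * Q := by rw [← hstein]
      _ = Q * ((A⁻¹ * A) * (P * (Aᵀ * Q))) - Q * (A⁻¹ * (P * Q)) := by
            rw [Matrix.mul_sub, Matrix.sub_mul]; simp only [Matrix.mul_assoc]
      _ = Q * (P * (Aᵀ * Q)) - Q * (A⁻¹ * (P * Q)) := by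
            rw [hAiA, Matrix.one_mul]
    rw [e1, hQPAtQ, hQAiPQ]
    abel
  -- invertibility of 1 + G * Q
  have hstar' : Aᵀ * Q = Q * A⁻¹ * (1 + G * Q) := by
    rw [Matrix.mul_add, Matrix.mul_one, ← Matrix.mul_assoc]
    exact hstar
  have hGQdet : IsUnit (1 + G * Q).det := by
    rw [isUnit_iff_ne_zero]
    intro hdet
    obtain ⟨v, hv0, hv⟩ := Matrix.exists_mulVec_eq_zero_iff.2 hdet
    have h1 : (Aᵀ * Q) *ᵥ v = 0 := by
      rw [hstar', ← Matrix.mulVec_mulVec, hv, Matrix.mulVec_zero]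
    have h2 : Q *ᵥ v = 0 := by
      have hAt : IsUnit Aᵀ := (Matrix.isUnit_transpose A).2 hA
      have hinj := Matrix.mulVec_injective_iff_isUnit.2 hAt
      apply hinj
      rw [← Matrix.mulVec_mulVec] at h1
      rw [h1, Matrix.mulVec_zero]
    have h3 : v = 0 := by
      have := hv
      rw [Matrix.add_mulVec, Matrix.one_mulVec, ← Matrix.mulVec_mulVec, h2,
        Matrix.mulVec_zero, add_zero] at this
      exact this
    exact hv0 h3
  have hRdet : IsUnit R.det := (Matrix.isUnit_iff_isUnit_det R).1 hR.isUnit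
  have hRRi : R * R⁻¹ = 1 := Matrix.mul_nonsing_inv R hRdet
  have hT1 : T = R * (1 + R⁻¹ * (Bᵀ * Q) * B) := by
    have h : R * (R⁻¹ * (Bᵀ * Q) * B) = Bᵀ * Q * B := by
      calc R * (R⁻¹ * (Bᵀ * Q) * B) = (R * R⁻¹) * ((Bᵀ * Q) * B) := by
            simp only [Matrix.mul_assoc]
      _ = Bᵀ * Q * B := by rw [hRRi, Matrix.one_mul]
    rw [Matrix.mul_add, Matrix.mul_one, h, hTdef]
  have hTdetunit : IsUnit T.det := by
    rw [hT1, Matrix.det_mul]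
    apply hRdet.mul
    have hcomm := Matrix.det_one_add_mul_comm (R⁻¹ * (Bᵀ * Q)) B
    rw [hcomm]
    have : B * (R⁻¹ * (Bᵀ * Q)) = G * Q := by
      rw [hGdef]; simp only [Matrix.mul_assoc]
    rw [this]
    exact hGQdet
  have hTunit : IsUnit T := (Matrix.isUnit_iff_isUnit_det T).2 hTdetunit
  have hTiT : T⁻¹ * T = 1 := Matrix.nonsing_inv_mul T hTdetunit
  -- the cancellation identity
  have e1 : Bᵀ * Q * (G * Q) = T * (R⁻¹ * (Bᵀ * Q)) - Bᵀ * Q := by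
    have hTR : T - R = Bᵀ * Q * B := by rw [hTdef, add_sub_cancel_left]
    calc Bᵀ * Q * (G * Q) = (Bᵀ * Q * B) * (R⁻¹ * (Bᵀ * Q)) := by
          rw [hGdef]; simp only [Matrix.mul_assoc]
    _ = (T - R) * (R⁻¹ * (Bᵀ * Q)) := by rw [hTR]
    _ = T * (R⁻¹ * (Bᵀ * Q)) - (R * R⁻¹) * (Bᵀ * Q) := by
          rw [Matrix.sub_mul]; simp only [Matrix.mul_assoc]
    _ = T * (R⁻¹ * (Bᵀ * Q)) - Bᵀ * Q := by rw [hRRi, Matrix.one_mul]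
  have hL1 : (Q - Q * B * T⁻¹ * (Bᵀ * Q)) * (1 + G * Q) = Q := by
    calc (Q - Q * B * T⁻¹ * (Bᵀ * Q)) * (1 + G * Q)
        = Q + Q * (G * Q) - (Q * B * T⁻¹ * (Bᵀ * Q) + Q * B * T⁻¹ * (Bᵀ * Q * (G * Q))) := by
          simp only [Matrix.mul_add, Matrix.add_mul, Matrix.mul_sub, Matrix.sub_mul,
            Matrix.mul_one, Matrix.one_mul, Matrix.mul_assoc]
          abel
    _ = Q + Q * (G * Q) -
        (Q * B * T⁻¹ * (Bᵀ * Q) + Q * B * T⁻¹ * (T * (R⁻¹ * (Bᵀ * Q)) - Bᵀ * Q)) := by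
          rw [e1]
    _ = Q + Q * (G * Q) - Q * B * ((T⁻¹ * T) * (R⁻¹ * (Bᵀ * Q))) := by
          simp only [Matrix.mul_add, Matrix.add_mul, Matrix.mul_sub, Matrix.sub_mul,
            Matrix.mul_one, Matrix.one_mul, Matrix.mul_assoc]
          abel
    _ = Q + Q * (G * Q) - Q * B * (R⁻¹ * (Bᵀ * Q)) := by
          rw [hTiT, Matrix.one_mul]
    _ = Q := by
          rw [hGdef]
          simp only [Matrix.mul_add, Matrix.add_mul, Matrix.mul_sub, Matrix.sub_mul,
            Matrix.mul_one, Matrix.one_mul, Matrix.mul_assoc]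
          abel
  have hGQi : (1 + G * Q) * (1 + G * Q)⁻¹ = 1 := Matrix.mul_nonsing_inv _ hGQdet
  have hX : Q - Q * B * T⁻¹ * (Bᵀ * Q) = Q * (1 + G * Q)⁻¹ := by
    calc Q - Q * B * T⁻¹ * (Bᵀ * Q)
        = (Q - Q * B * T⁻¹ * (Bᵀ * Q)) * ((1 + G * Q) * (1 + G * Q)⁻¹) := by
          rw [hGQi, Matrix.mul_one]
    _ = ((Q - Q * B * T⁻¹ * (Bᵀ * Q)) * (1 + G * Q)) * (1 + G * Q)⁻¹ := by
          simp only [Matrix.mul_assoc]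
    _ = Q * (1 + G * Q)⁻¹ := by rw [hL1]
  have hfinal : Aᵀ * Q * A - Aᵀ * Q * B * T⁻¹ * (Bᵀ * Q * A) = Q := by
    calc Aᵀ * Q * A - Aᵀ * Q * B * T⁻¹ * (Bᵀ * Q * A)
        = Aᵀ * ((Q - Q * B * T⁻¹ * (Bᵀ * Q)) * A) := by
          simp only [Matrix.mul_add, Matrix.add_mul, Matrix.mul_sub, Matrix.sub_mul,
            Matrix.mul_one, Matrix.one_mul, Matrix.mul_assoc]
    _ = Aᵀ * (Q * (1 + G * Q)⁻¹ * A) := by rw [hX]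
    _ = (Aᵀ * Q) * (1 + G * Q)⁻¹ * A := by simp only [Matrix.mul_assoc]
    _ = Q * A⁻¹ * ((1 + G * Q) * (1 + G * Q)⁻¹) * A := by
          rw [hstar']; simp only [Matrix.mul_assoc]
    _ = Q * (A⁻¹ * A) := by rw [hGQi, Matrix.mul_one]; simp only [Matrix.mul_assoc]
    _ = Q := by rw [hAiA, Matrix.mul_one]
  refine ⟨hQs, hTunit, hfinal.symm⟩
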